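/- Let p be prime, ℓ₀ a positive multiple of 2(p-1), and define A₀ ⊆ (Z/pZ)^{ℓ₀} to be the set of vectors whose first 2ℓ₀/(p-1) coordinates use only the values 1 and 2 each exactly ℓ₀/(p-1) times, whose next 2ℓ₀/(p-1) coordinates use only the values 3 and 4 each exactly ℓ₀/(p-1) times, and so on through the pair (p-2, p-1). Then A₀ is {1}-covering (every pair of distinct vectors has some coordinate difference equal to 1 mod p) and |A₀| = C(2ℓ₀/(p-1), ℓ₀/(p-1))^{(p-1)/2}. -/

import Mathlib

open Finset

private lemma emb_lt19 {k m ℓ : ℕ} (hℓ : ℓ = k * (2*m)) {t j : ℕ} (ht : t < k) (hj : j < 2*m) :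
    t * (2*m) + j < ℓ := by
  subst hℓ
  calc t*(2*m)+j < (t+1)*(2*m) := by nlinarith
  _ ≤ k*(2*m) := Nat.mul_le_mul_right _ ht

private lemma div_emb19 {m t j : ℕ} (hm : 0 < m) (hj : j < 2*m) :
    (t*(2*m)+j) / (2*m) = t ∧ (t*(2*m)+j) % (2*m) = j := by
  have h : t*(2*m)+j = j + (2*m)*t := by ring
  constructor
  · rw [h, Nat.add_mul_div_left _ _ (by omega), Nat.div_eq_of_lt hj, Nat.zero_add]
  · rw [h, Nat.add_mul_mod_self_left, Nat.mod_eq_of_lt hj]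

private lemma block_card19 {ℓ k m : ℕ} (hℓ : ℓ = k*(2*m)) (hm : 0 < m) {t : ℕ} (ht : t < k)
    (Q : Fin ℓ → Prop) [DecidablePred Q] :
    (Finset.univ.filter fun i : Fin ℓ => (i:ℕ)/(2*m) = t ∧ Q i).card
    = (Finset.univ.filter fun j : Fin (2*m) =>
        Q ⟨t*(2*m)+(j:ℕ), emb_lt19 hℓ ht j.isLt⟩).card := by
  have h2m : 0 < 2*m := by omega
  refine Finset.card_bij (fun i _ => (⟨(i:ℕ) % (2*m), Nat.mod_lt _ h2m⟩ : Fin (2*m))) ?_ ?_ ?_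
  · intro i hi
    simp only [mem_filter, mem_univ, true_and] at hi ⊢
    have hieq : (⟨t*(2*m)+(i:ℕ)%(2*m), emb_lt19 hℓ ht (Nat.mod_lt _ h2m)⟩ : Fin ℓ) = i := by
      apply Fin.ext
      simp only []
      rw [← hi.1, Nat.div_add_mod']
    rw [hieq]
    exact hi.2
  · intro i₁ h₁ i₂ h₂ heq
    simp only [mem_filter, mem_univ, true_and] at h₁ h₂
    have := congrArg Fin.val heq
    simp only [] at this
    apply Fin.ext
    have e1 := Nat.div_add_mod (i₁:ℕ) (2*m)
    have e2 := Nat.div_add_mod (i₂:ℕ) (2*m)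
    rw [h₁.1] at e1; rw [h₂.1] at e2
    omega
  · intro j hj
    simp only [mem_filter, mem_univ, true_and] at hj
    refine ⟨⟨t*(2*m)+(j:ℕ), emb_lt19 hℓ ht j.isLt⟩, ?_, ?_⟩
    · simp only [mem_filter, mem_univ, true_and]
      exact ⟨(div_emb19 hm j.isLt).1, hj⟩
    · apply Fin.ext
      simp only []
      exact (div_emb19 hm j.isLt).2



open scoped Classical in
/-- The base family `A₀`: vectors in `(ZMod p)^ℓ` whose `t`-th block of
`2ℓ/(p-1)` coordinates uses only the values `2t+1` and `2t+2`, each exactly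
`ℓ/(p-1)` times. -/
noncomputable def baseFamily (p ℓ : ℕ) [NeZero p] : Finset (Fin ℓ → ZMod p) :=
  Finset.univ.filter fun b =>
    (∀ i : Fin ℓ,
      b i = ((2 * ((i : ℕ) / (2 * ℓ / (p - 1))) + 1 : ℕ) : ZMod p) ∨
      b i = ((2 * ((i : ℕ) / (2 * ℓ / (p - 1))) + 2 : ℕ) : ZMod p)) ∧
    ∀ t : ℕ, t < (p - 1) / 2 →
      (Finset.univ.filter fun i : Fin ℓ =>
        (i : ℕ) / (2 * ℓ / (p - 1)) = t ∧ b i = ((2 * t + 1 : ℕ) : ZMod p)).card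
        = ℓ / (p - 1)

/-- `A₀` is `{1}`-covering and has size `C(2ℓ/(p-1), ℓ/(p-1))^((p-1)/2)`. -/
theorem stmt19 (p ℓ : ℕ) [NeZero p] (hp : p.Prime) (hodd : Odd p) (hℓ : 0 < ℓ)
    (hdvd : 2 * (p - 1) ∣ ℓ) :
    (∀ v ∈ baseFamily p ℓ, ∀ w ∈ baseFamily p ℓ, v ≠ w → ∃ i, v i - w i = 1) ∧
    (baseFamily p ℓ).card =
      (Nat.choose (2 * ℓ / (p - 1)) (ℓ / (p - 1))) ^ ((p - 1) / 2) := by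
  classical
  haveI := Fact.mk hp
  obtain ⟨c, hc⟩ := hdvd
  have hp2 : 2 ≤ p := hp.two_le
  obtain ⟨a, ha⟩ := hodd
  have hpos : 0 < p - 1 := by omega
  have hc0 : 0 < c := by
    rcases Nat.eq_zero_or_pos c with h | h
    · subst h; omega
    · exact h
  set m := ℓ / (p - 1) with hm
  set k := (p - 1) / 2 with hk
  have hm2c : m = 2 * c := by
    rw [hm, hc, show 2*(p-1)*c = (p-1)*(2*c) by ring, Nat.mul_div_cancel_left _ hpos]
  have hB : 2 * ℓ / (p - 1) = 2 * m := by
    rw [hc, show 2*(2*(p-1)*c) = (p-1)*(2*(2*c)) by ring, Nat.mul_div_cancel_left _ hpos, hm2c]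
  have hk2 : p - 1 = 2 * k := by omega
  have hℓeq : ℓ = k * (2 * m) := by rw [hc, hk2, hm2c]; ring
  have hm0 : 0 < m := by omega
  have h2m : 0 < 2 * m := by omega
  have hdivlt : ∀ i : Fin ℓ, (i : ℕ) / (2 * m) < k := fun i =>
    (Nat.div_lt_iff_lt_mul h2m).2 (by rw [← hℓeq]; exact i.isLt)
  have hne12 : ∀ t : ℕ, ((2 * t + 1 : ℕ) : ZMod p) ≠ ((2 * t + 2 : ℕ) : ZMod p) := by
    intro t h
    have h1 : ((2*t+2 : ℕ) : ZMod p) - ((2*t+1 : ℕ) : ZMod p) = 1 := by push_cast; ring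
    rw [← h, sub_self] at h1
    exact zero_ne_one h1
  have hmem : ∀ b : Fin ℓ → ZMod p, b ∈ baseFamily p ℓ ↔
      (∀ i : Fin ℓ, b i = ((2 * ((i : ℕ) / (2 * m)) + 1 : ℕ) : ZMod p) ∨
        b i = ((2 * ((i : ℕ) / (2 * m)) + 2 : ℕ) : ZMod p)) ∧
      ∀ t : ℕ, t < k →
        (Finset.univ.filter fun i : Fin ℓ =>
          (i : ℕ) / (2 * m) = t ∧ b i = ((2 * t + 1 : ℕ) : ZMod p)).card = m := by
    intro b
    simp only [baseFamily, mem_filter, mem_univ, true_and, hB, ← hm, ← hk]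
  constructor
  · -- covering
    intro v hv w hw hvw
    by_contra hno
    push_neg at hno
    rw [hmem] at hv hw
    obtain ⟨hv1, hv2⟩ := hv
    obtain ⟨hw1, hw2⟩ := hw
    apply hvw
    funext i
    by_contra hi
    set t := (i : ℕ) / (2 * m) with htdef
    have ht : t < k := hdivlt i
    rcases hv1 i with hv' | hv' <;> rcases hw1 i with hw' | hw' <;>
        rw [← htdef] at hv' hw'
    · exact hi (hv'.trans hw'.symm)
    · -- v i = 2t+1, w i = 2t+2
      have hsub : (univ.filter fun j : Fin ℓ =>
            (j:ℕ)/(2*m) = t ∧ w j = ((2*t+1 : ℕ) : ZMod p))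
          ⊆ (univ.filter fun j : Fin ℓ =>
            (j:ℕ)/(2*m) = t ∧ v j = ((2*t+1 : ℕ) : ZMod p)) := by
        intro j hj
        simp only [mem_filter, mem_univ, true_and] at hj ⊢
        refine ⟨hj.1, ?_⟩
        rcases hv1 j with h | h
        · rw [hj.1] at h; exact h
        · exfalso
          apply hno j
          rw [hj.1] at h
          rw [h, hj.2]
          push_cast; ring
      have heq := Finset.eq_of_subset_of_card_le hsub
        (by rw [hv2 t ht, hw2 t ht])
      have hiv : i ∈ (univ.filter fun j : Fin ℓ =>
          (j:ℕ)/(2*m) = t ∧ v j = ((2*t+1 : ℕ) : ZMod p)) := by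
        simp only [mem_filter, mem_univ, true_and]
        exact ⟨htdef.symm, hv'⟩
      rw [← heq] at hiv
      simp only [mem_filter, mem_univ, true_and] at hiv
      exact hne12 t (hiv.2.symm.trans hw')
    · -- v i = 2t+2, w i = 2t+1
      exact hno i (by rw [hv', hw']; push_cast; ring)
    · exact hi (hv'.trans hw'.symm)
  · -- counting
    have hTcard : (Fintype.piFinset fun _ : Fin k =>
        (Finset.univ : Finset (Fin (2*m))).powersetCard m).card
        = (Nat.choose (2*m) m) ^ k := by
      rw [Fintype.card_piFinset]
      simp [Finset.card_powersetCard]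
    rw [hB]
    rw [← hTcard]
    refine Finset.card_bij'
      (fun b _ => fun t : Fin k => (univ.filter fun j : Fin (2*m) =>
        b ⟨(t:ℕ)*(2*m)+(j:ℕ), emb_lt19 hℓeq t.isLt j.isLt⟩
          = ((2*(t:ℕ)+1 : ℕ) : ZMod p)))
      (fun f _ => fun i : Fin ℓ =>
        if (⟨(i:ℕ)%(2*m), Nat.mod_lt _ h2m⟩ : Fin (2*m)) ∈ f ⟨(i:ℕ)/(2*m), hdivlt i⟩
        then ((2*((i:ℕ)/(2*m))+1 : ℕ) : ZMod p)
        else ((2*((i:ℕ)/(2*m))+2 : ℕ) : ZMod p)) ?_ ?_ ?_ ?_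
    · -- Φ b ∈ T
      intro b hb
      rw [hmem] at hb
      rw [Fintype.mem_piFinset]
      intro t
      rw [Finset.mem_powersetCard]
      refine ⟨Finset.subset_univ _, ?_⟩
      rw [← block_card19 hℓeq hm0 t.isLt
        (fun i : Fin ℓ => b i = ((2*(t:ℕ)+1 : ℕ) : ZMod p))]
      exact hb.2 (t:ℕ) t.isLt
    · -- Ψ f ∈ baseFamily
      intro f hf
      rw [Fintype.mem_piFinset] at hf
      rw [hmem]
      constructor
      · intro i
        by_cases h : (⟨(i:ℕ)%(2*m), Nat.mod_lt _ h2m⟩ : Fin (2*m)) ∈ f ⟨(i:ℕ)/(2*m), hdivlt i⟩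
        · left; simp only [if_pos h]
        · right; simp only [if_neg h]
      · intro t ht
        rw [block_card19 hℓeq hm0 ht]
        have hft := hf ⟨t, ht⟩
        rw [Finset.mem_powersetCard] at hft
        conv_rhs => rw [← hft.2]
        congr 1
        ext j
        simp only [mem_filter, mem_univ, true_and, Fin.val_mk,
          (div_emb19 hm0 j.isLt).1, (div_emb19 hm0 j.isLt).2, Fin.eta]
        constructor
        · intro h
          by_contra hmem'
          rw [if_neg hmem'] at h
          exact hne12 t h.symm
        · intro h
          rw [if_pos h]
    · -- left inverse
      intro b hb
      rw [hmem] at hb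
      funext i
      have hie : (⟨((i:ℕ)/(2*m))*(2*m) + (i:ℕ)%(2*m),
          emb_lt19 hℓeq (hdivlt i) (Nat.mod_lt _ h2m)⟩ : Fin ℓ) = i :=
        Fin.ext (Nat.div_add_mod' _ _)
      simp only [mem_filter, mem_univ, true_and, Fin.val_mk, hie]
      rcases hb.1 i with h | h
      · rw [if_pos h, h]
      · rw [if_neg, h]
        rw [h]
        exact fun hcontra => hne12 _ hcontra.symm
    · -- right inverse
      intro f hf
      funext t
      ext j
      simp only [mem_filter, mem_univ, true_and, Fin.val_mk,
        (div_emb19 hm0 j.isLt).1, (div_emb19 hm0 j.isLt).2, Fin.eta]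
      constructor
      · intro h
        by_contra hmem'
        rw [if_neg hmem'] at h
        exact hne12 _ h.symm
      · intro h
        rw [if_pos h]
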